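/- Let 3 < n ≤ k and f : K^n → K. Then f ∈ G_{2,k}^{n,−} if and only if f = t ⊕ g where g depends essentially on all n variables with all minors g_{i←j} identically zero, and t is a totally symmetric n-ary function with Ess(t_{i←j}) = {x_1,...,x_n} \ {x_i, x_j} for all i ≠ j. -/

import Mathlib

open scoped Classical

/-- The identification minor `f_{i←j}`: the `i`-th argument is replaced by the `j`-th. -/
def minor {n k : ℕ} (f : (Fin n → Fin k) → Fin k) (i j : Fin n) :
    (Fin n → Fin k) → Fin k :=
  fun a => f (Function.update a i (a j))

/-- The variable `x_i` is essential in `f`. -/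
def Essential {n k : ℕ} (f : (Fin n → Fin k) → Fin k) (i : Fin n) : Prop :=
  ∃ a : Fin n → Fin k, ∃ b : Fin k, f (Function.update a i b) ≠ f a

/-- The number of essential variables of `f`. -/
noncomputable def essCount {n k : ℕ} (f : (Fin n → Fin k) → Fin k) : ℕ :=
  (Finset.univ.filter (fun i => Essential f i)).card

/-- The essential arity gap of `f`. -/
noncomputable def gap {n k : ℕ} (f : (Fin n → Fin k) → Fin k) : ℕ :=
  essCount f -
    Finset.sup
      (Finset.univ.filter
        (fun p : Fin n × Fin n =>
          p.1 ≠ p.2 ∧ Essential f p.1 ∧ Essential f p.2))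
      (fun p => essCount (minor f p.1 p.2))

namespace G2Aux

variable {n k : ℕ} {f : (Fin n → Fin k) → Fin k}

lemma notEss_iff (F : (Fin n → Fin k) → Fin k) (i : Fin n) :
    ¬ Essential F i ↔ ∀ a b, F (Function.update a i b) = F a := by
  unfold Essential; push_neg; rfl

lemma move (Hf : ∀ u v : Fin n, u ≠ v → ¬ Essential (minor f u v) v)
    {u v : Fin n} (huv : u ≠ v) (b : Fin n → Fin k) (d : Fin k) (hb : b u = b v) :
    f (Function.update (Function.update b u d) v d) = f b := by
  have H := (notEss_iff _ _).mp (Hf u v huv) b d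
  simp only [minor, Function.update_self] at H
  rw [← hb, Function.update_eq_self] at H
  rw [Function.update_comm huv.symm] at H
  exact H

lemma swap_eq_update {u v : Fin n} (huv : u ≠ v) (a : Fin n → Fin k) :
    a ∘ ⇑(Equiv.swap u v) = Function.update (Function.update a u (a v)) v (a u) := by
  funext w
  simp only [Function.comp_apply, Equiv.swap_apply_def, Function.update_apply]
  split_ifs <;> simp_all

lemma swapTuple_comm {u v : Fin n} (huv : u ≠ v) (a : Fin n → Fin k) :
    Function.update (Function.update a u (a v)) v (a u)
      = Function.update (Function.update a v (a u)) u (a v) := by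
  funext w
  simp only [Function.update_apply]
  split_ifs <;> simp_all

lemma H1 (Hf : ∀ u v : Fin n, u ≠ v → ¬ Essential (minor f u v) v)
    {p q v : Fin n} (hpq : p ≠ q) (hpv : p ≠ v) (hqv : q ≠ v)
    (a : Fin n → Fin k) (ha : a p = a q) :
    f (Function.update (Function.update a p (a v)) v (a p)) = f a := by
  set A1 := Function.update (Function.update a p (a v)) q (a v) with hA1
  have m1 : f A1 = f a := move Hf hpq a (a v) ha
  have h1qv : A1 q = A1 v := by
    simp [hA1, Function.update_apply, hqv, hpv, hqv.symm, hpv.symm, hpq, hpq.symm]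
  have m2 : f (Function.update (Function.update A1 q (a p)) v (a p)) = f A1 :=
    move Hf hqv A1 (a p) h1qv
  have key : Function.update (Function.update A1 q (a p)) v (a p)
      = Function.update (Function.update a p (a v)) v (a p) := by
    funext w
    simp only [hA1, Function.update_apply]
    clear m1 h1qv m2
    split_ifs <;> simp_all
  rw [key] at m2
  rw [m2, m1]

lemma H2 (Hf : ∀ u v : Fin n, u ≠ v → ¬ Essential (minor f u v) v)
    {p q u v : Fin n} (hpq : p ≠ q) (hpu : p ≠ u) (hpv : p ≠ v)
    (hqu : q ≠ u) (hqv : q ≠ v) (huv : u ≠ v)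
    (a : Fin n → Fin k) (ha : a p = a q) :
    f (Function.update (Function.update a u (a v)) v (a u)) = f a := by
  set A1 := Function.update (Function.update a p (a u)) q (a u) with hA1
  have m1 : f A1 = f a := move Hf hpq a (a u) ha
  have h1 : A1 p = A1 u := by
    simp [hA1, Function.update_apply, hpq, hpu, hpv, hqu, hqv, huv,
      hpq.symm, hpu.symm, hpv.symm, hqu.symm, hqv.symm, huv.symm]
  set A2 := Function.update (Function.update A1 p (a v)) u (a v) with hA2
  have m2 : f A2 = f A1 := move Hf hpu A1 (a v) h1
  have h2 : A2 p = A2 v := by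
    simp [hA2, hA1, Function.update_apply, hpq, hpu, hpv, hqu, hqv, huv,
      hpq.symm, hpu.symm, hpv.symm, hqu.symm, hqv.symm, huv.symm]
  set A3 := Function.update (Function.update A2 p (a u)) v (a u) with hA3
  have m3 : f A3 = f A2 := move Hf hpv A2 (a u) h2
  have h3 : A3 p = A3 q := by
    simp [hA3, hA2, hA1, Function.update_apply, hpq, hpu, hpv, hqu, hqv, huv,
      hpq.symm, hpu.symm, hpv.symm, hqu.symm, hqv.symm, huv.symm]
  have m4 : f (Function.update (Function.update A3 p (a p)) q (a p)) = f A3 :=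
    move Hf hpq A3 (a p) h3
  have key : Function.update (Function.update A3 p (a p)) q (a p)
      = Function.update (Function.update a u (a v)) v (a u) := by
    funext w
    simp only [hA3, hA2, hA1, Function.update_apply]
    clear m1 m2 m3 m4 h1 h2 h3
    split_ifs <;> simp_all
  rw [key] at m4
  rw [m4, m3, m2, m1]

lemma swap_noninj (Hf : ∀ u v : Fin n, u ≠ v → ¬ Essential (minor f u v) v)
    {p q : Fin n} (hpq : p ≠ q) (a : Fin n → Fin k) (ha : a p = a q)
    (u v : Fin n) :
    f (a ∘ ⇑(Equiv.swap u v)) = f a := by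
  rcases eq_or_ne u v with rfl | huv
  · simp [Equiv.swap_self]
  rw [swap_eq_update huv]
  rcases eq_or_ne (a u) (a v) with hauv | hauv
  · congr 1
    funext w
    simp only [Function.update_apply]
    split_ifs <;> simp_all
  rcases eq_or_ne u p with rfl | hup
  · have hvq : v ≠ q := fun h => hauv (by rw [h, ← ha])
    exact H1 Hf hpq huv (Ne.symm hvq) a ha
  rcases eq_or_ne u q with rfl | huq
  · have hvp : v ≠ p := fun h => hauv (by rw [h, ha])
    exact H1 Hf hpq.symm huv (Ne.symm hvp) a ha.symm
  rcases eq_or_ne v p with rfl | hvp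
  · rw [swapTuple_comm huv]
    exact H1 Hf hpq huv.symm (fun h : q = u => hauv (by rw [← h, ← ha])) a ha
  rcases eq_or_ne v q with rfl | hvq
  · rw [swapTuple_comm huv]
    exact H1 Hf hpq.symm huv.symm (Ne.symm hup) a ha.symm
  · exact H2 Hf hpq (Ne.symm hup) (Ne.symm hvp) (Ne.symm huq) (Ne.symm hvq) huv a ha

lemma perm_noninj (Hf : ∀ u v : Fin n, u ≠ v → ¬ Essential (minor f u v) v)
    (σ : Equiv.Perm (Fin n)) :
    ∀ (a : Fin n → Fin k), (∃ p q, p ≠ q ∧ a p = a q) → f (a ∘ ⇑σ) = f a := by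
  refine Equiv.Perm.swap_induction_on σ (by intro a _; simp) ?_
  intro σ x y hxy IH a h
  obtain ⟨p, q, hpq, ha⟩ := h
  have hc : a ∘ ⇑(Equiv.swap x y * σ) = (a ∘ ⇑(Equiv.swap x y)) ∘ ⇑σ := by
    funext w; simp [Equiv.Perm.mul_apply]
  rw [hc]
  have hninj : ∃ p' q', p' ≠ q' ∧ (a ∘ ⇑(Equiv.swap x y)) p' = (a ∘ ⇑(Equiv.swap x y)) q' := by
    refine ⟨Equiv.swap x y p, Equiv.swap x y q, fun h => hpq ((Equiv.swap x y).injective h), ?_⟩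
    simp [ha]
  rw [IH _ hninj]
  exact swap_noninj Hf hpq a ha x y

lemma update_comp_perm (a : Fin n → Fin k) (σ : Equiv.Perm (Fin n)) (m : Fin n) (b : Fin k) :
    (Function.update a m b) ∘ ⇑σ = Function.update (a ∘ ⇑σ) (σ⁻¹ m) b := by
  funext w
  simp only [Function.comp_apply, Function.update_apply]
  by_cases h : w = σ⁻¹ m
  · subst h; simp
  · rw [if_neg (fun hc => h (by rw [← hc]; simp)), if_neg h]

lemma ess_precomp_mp (F : (Fin n → Fin k) → Fin k) (σ : Equiv.Perm (Fin n)) (m : Fin n) :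
    Essential (fun a => F (a ∘ ⇑σ)) m → Essential F (σ⁻¹ m) := by
  rintro ⟨a, b, h⟩
  exact ⟨a ∘ ⇑σ, b, by rwa [← update_comp_perm]⟩

lemma ess_precomp (F : (Fin n → Fin k) → Fin k) (σ : Equiv.Perm (Fin n)) (m : Fin n) :
    Essential (fun a => F (a ∘ ⇑σ)) m ↔ Essential F (σ⁻¹ m) := by
  constructor
  · exact ess_precomp_mp F σ m
  · intro h
    have hF : F = fun a => (fun b => F (b ∘ ⇑σ)) (a ∘ ⇑σ⁻¹) := by
      funext a; simp only [Function.comp]; congr 1; funext w; simp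
    rw [hF] at h
    have := ess_precomp_mp (fun b => F (b ∘ ⇑σ)) σ⁻¹ (σ⁻¹ m) h
    simpa using this

lemma essCount_precomp (F : (Fin n → Fin k) → Fin k) (σ : Equiv.Perm (Fin n)) :
    essCount (fun a => F (a ∘ ⇑σ)) = essCount F := by
  unfold essCount
  refine Finset.card_bij' (fun m _ => σ⁻¹ m) (fun m _ => σ m) ?_ ?_ ?_ ?_
  · intro m hm
    simp only [Finset.mem_filter, Finset.mem_univ, true_and] at hm ⊢
    exact (ess_precomp F σ m).mp hm
  · intro m hm
    simp only [Finset.mem_filter, Finset.mem_univ, true_and] at hm ⊢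
    exact (ess_precomp F σ (σ m)).mpr (by simpa using hm)
  · intro m _; simp
  · intro m _; simp

lemma exists_perm_pair {α : Type*} [DecidableEq α] {a b c d : α} (hab : a ≠ b) (hcd : c ≠ d) :
    ∃ σ : Equiv.Perm α, σ a = c ∧ σ b = d := by
  set e := Equiv.swap a c b with he
  have hce : c ≠ e := by
    intro h
    apply hab
    have := congrArg (Equiv.swap a c) h
    rw [he, Equiv.swap_apply_self, Equiv.swap_apply_right] at this
    exact this
  refine ⟨Equiv.swap e d * Equiv.swap a c, ?_, ?_⟩
  · simp only [Equiv.Perm.mul_apply, Equiv.swap_apply_left]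
    exact Equiv.swap_apply_of_ne_of_ne hce hcd
  · simp only [Equiv.Perm.mul_apply, ← he]
    exact Equiv.swap_apply_left e d

lemma card_filter_ne {i j : Fin n} (hij : i ≠ j) :
    (Finset.univ.filter (fun m : Fin n => m ≠ i ∧ m ≠ j)).card = n - 2 := by
  have h : Finset.univ.filter (fun m : Fin n => m ≠ i ∧ m ≠ j) = ({i, j} : Finset (Fin n))ᶜ := by
    ext m; simp [not_or]
  rw [h, Finset.card_compl, Finset.card_pair hij, Fintype.card_fin]

lemma minor_inessential_left {i j : Fin n} (hij : i ≠ j) :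
    ¬ Essential (minor f i j) i := by
  rintro ⟨a, b, hab⟩
  apply hab
  simp only [minor]
  rw [Function.update_of_ne (Ne.symm hij), Function.update_idem]

lemma minor_perm (Hf : ∀ u v : Fin n, u ≠ v → ¬ Essential (minor f u v) v)
    {i j : Fin n} (hij : i ≠ j) (σ : Equiv.Perm (Fin n)) :
    minor f (σ i) (σ j) = fun a => minor f i j (a ∘ ⇑σ) := by
  funext a
  simp only [minor, Function.comp_apply]
  have h1 : Function.update (a ∘ ⇑σ) i (a (σ j)) = (Function.update a (σ i) (a (σ j))) ∘ ⇑σ := by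
    funext w
    simp only [Function.comp_apply, Function.update_apply]
    by_cases h : w = i
    · subst h; simp
    · rw [if_neg h, if_neg (fun hc => h (σ.injective hc))]
  rw [h1]
  exact (perm_noninj Hf σ _ ⟨σ i, σ j, σ.injective.ne hij,
    by simp [Function.update_apply, Ne.symm (σ.injective.ne hij)]⟩).symm

lemma exists_two_ne (hn : 2 < n) (m : Fin n) :
    ∃ i j : Fin n, i ≠ j ∧ i ≠ m ∧ j ≠ m := by
  refine ⟨⟨if m.val = 0 then 1 else 0, by split_ifs <;> omega⟩,
    ⟨if m.val ≤ 1 then 2 else 1, by split_ifs <;> omega⟩, ?_, ?_, ?_⟩ <;>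
    (simp only [ne_eq, Fin.ext_iff, Fin.val_mk]; split_ifs <;> first | exact not_false | omega)

lemma exists_one_ne (hn : 1 < n) (m : Fin n) :
    ∃ p : Fin n, p ≠ m := by
  refine ⟨⟨if m.val = 0 then 1 else 0, by split_ifs <;> omega⟩, ?_⟩
  simp only [ne_eq, Fin.ext_iff, Fin.val_mk]; split_ifs <;> first | exact not_false | omega

noncomputable def gInd (n k : ℕ) (hnk : n ≤ k) [NeZero k] : (Fin n → Fin k) → Fin k :=
  fun a => if ∃ σ : Equiv.Perm (Fin n), a = Fin.castLE hnk ∘ ⇑σ then 1 else 0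

lemma gInd_noninj (hnk : n ≤ k) [NeZero k] {a : Fin n → Fin k}
    (h : ∃ p q : Fin n, p ≠ q ∧ a p = a q) : gInd n k hnk a = 0 := by
  unfold gInd
  rw [if_neg]
  rintro ⟨σ, rfl⟩
  obtain ⟨p, q, hpq, ha⟩ := h
  exact hpq (σ.injective (Fin.castLE_injective hnk ha))

lemma gInd_perm (hnk : n ≤ k) [NeZero k] (σ : Equiv.Perm (Fin n)) (a : Fin n → Fin k) :
    gInd n k hnk (a ∘ ⇑σ) = gInd n k hnk a := by
  unfold gInd
  by_cases hc : ∃ τ : Equiv.Perm (Fin n), a = Fin.castLE hnk ∘ ⇑τ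
  · rw [if_pos, if_pos hc]
    obtain ⟨τ, rfl⟩ := hc
    exact ⟨τ * σ, by funext w; simp [Equiv.Perm.mul_apply]⟩
  · rw [if_neg, if_neg hc]
    rintro ⟨τ, hτ⟩
    refine hc ⟨τ * σ⁻¹, ?_⟩
    funext w
    have := congrFun hτ (σ⁻¹ w)
    simpa [Equiv.Perm.mul_apply] using this

lemma gInd_self (hnk : n ≤ k) [NeZero k] : gInd n k hnk (Fin.castLE hnk) = 1 := by
  unfold gInd
  rw [if_pos ⟨1, by funext w; simp⟩]

end G2Aux

theorem mem_G_minus_iff {k n : ℕ} (hn : 3 < n) (hnk : n ≤ k)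
    (f : (Fin n → Fin k) → Fin k) :
    (essCount f = n ∧ gap f = 2 ∧
      ∀ u v : Fin n, u ≠ v → ¬ Essential (minor f u v) v) ↔
      ∃ t g : (Fin n → Fin k) → Fin k,
        f = (fun a => t a + g a) ∧
        (∀ i : Fin n, Essential g i) ∧
        (∀ i j : Fin n, i ≠ j →
          minor g i j = fun _ => (⟨0, by omega⟩ : Fin k)) ∧
        (∀ σ : Equiv.Perm (Fin n), ∀ a : Fin n → Fin k, t (a ∘ σ) = t a) ∧
        (∀ i j : Fin n, i ≠ j →
          ∀ m : Fin n, Essential (minor t i j) m ↔ (m ≠ i ∧ m ≠ j)) := by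
  haveI : NeZero k := ⟨by omega⟩
  have hzero : (⟨0, by omega⟩ : Fin k) = 0 := by ext; simp
  constructor
  · rintro ⟨h1, h2, Hf⟩
    have hall : ∀ i, Essential f i := by
      have hfe : Finset.univ.filter (fun i => Essential f i) = Finset.univ := by
        refine Finset.eq_of_subset_of_card_le (Finset.subset_univ _) ?_
        rw [Finset.card_univ, Fintype.card_fin]
        exact le_of_eq h1.symm
      intro i
      have : i ∈ Finset.univ.filter (fun i => Essential f i) := hfe.symm ▸ Finset.mem_univ i
      exact (Finset.mem_filter.mp this).2
    have hsym := G2Aux.perm_noninj Hf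
    -- key fact : essential variables of every minor are exactly the complement of {i,j}
    have key : ∀ i j : Fin n, i ≠ j → ∀ m, Essential (minor f i j) m ↔ (m ≠ i ∧ m ≠ j) := by
      have hsub : ∀ i j : Fin n, i ≠ j →
          Finset.univ.filter (fun m => Essential (minor f i j) m) ⊆ ({i, j} : Finset (Fin n))ᶜ := by
        intro i j hij m hm
        simp only [Finset.mem_filter, Finset.mem_univ, true_and] at hm
        simp only [Finset.mem_compl, Finset.mem_insert, Finset.mem_singleton, not_or]
        constructor
        · intro hmi; exact G2Aux.minor_inessential_left hij (hmi ▸ hm)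
        · intro hmj; exact Hf i j hij (hmj ▸ hm)
      have hle : ∀ i j : Fin n, i ≠ j → essCount (minor f i j) ≤ n - 2 := by
        intro i j hij
        calc essCount (minor f i j) ≤ ({i, j} : Finset (Fin n))ᶜ.card :=
              Finset.card_le_card (hsub i j hij)
          _ = n - 2 := by rw [Finset.card_compl, Finset.card_pair hij, Fintype.card_fin]
      unfold gap at h2
      rw [h1] at h2
      set S := Finset.univ.filter
        (fun p : Fin n × Fin n => p.1 ≠ p.2 ∧ Essential f p.1 ∧ Essential f p.2) with hS
      have hSne : S.Nonempty := by
        refine ⟨(⟨0, by omega⟩, ⟨1, by omega⟩), ?_⟩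
        simp only [hS, Finset.mem_filter, Finset.mem_univ, true_and]
        exact ⟨by simp [Fin.ext_iff], hall _, hall _⟩
      obtain ⟨p, hpS, hpsup⟩ :=
        Finset.exists_mem_eq_sup S hSne (fun p => essCount (minor f p.1 p.2))
      have hp12 : p.1 ≠ p.2 := by
        rw [hS] at hpS
        exact (Finset.mem_filter.mp hpS).2.1
      rw [hpsup] at h2
      have hval : essCount (minor f p.1 p.2) = n - 2 := by
        have := hle p.1 p.2 hp12
        omega
      have hallpairs : ∀ i j : Fin n, i ≠ j → essCount (minor f i j) = n - 2 := by
        intro i j hij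
        obtain ⟨σ, hσ1, hσ2⟩ := G2Aux.exists_perm_pair hp12 hij
        have hmp : minor f i j = fun a => minor f p.1 p.2 (a ∘ ⇑σ) := by
          rw [← hσ1, ← hσ2]; exact G2Aux.minor_perm Hf hp12 σ
        rw [hmp, G2Aux.essCount_precomp, hval]
      intro i j hij m
      have hfe : Finset.univ.filter (fun m => Essential (minor f i j) m)
          = ({i, j} : Finset (Fin n))ᶜ := by
        refine Finset.eq_of_subset_of_card_le (hsub i j hij) ?_
        rw [Finset.card_compl, Finset.card_pair hij, Fintype.card_fin]
        exact le_of_eq (hallpairs i j hij).symm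
      constructor
      · intro hE
        have : m ∈ ({i, j} : Finset (Fin n))ᶜ :=
          hfe ▸ (Finset.mem_filter.mpr ⟨Finset.mem_univ m, hE⟩)
        simpa [not_or] using this
      · rintro ⟨hmi, hmj⟩
        have : m ∈ Finset.univ.filter (fun m => Essential (minor f i j) m) := by
          rw [hfe]; simp [not_or, hmi, hmj]
        exact (Finset.mem_filter.mp this).2
    by_cases hf0 : ∀ a : Fin n → Fin k, f (a ∘ ⇑(Tuple.sort a)) = f a
    · -- `f` itself is totally symmetric: use an indicator function as `g`
      refine ⟨fun a => f a - G2Aux.gInd n k hnk a, G2Aux.gInd n k hnk, ?_, ?_, ?_, ?_, ?_⟩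
      · funext a; exact (sub_add_cancel _ _).symm
      · intro m
        obtain ⟨p, hpm⟩ := G2Aux.exists_one_ne (by omega) m
        refine ⟨Fin.castLE hnk, Fin.castLE hnk p, ?_⟩
        rw [G2Aux.gInd_self hnk, G2Aux.gInd_noninj hnk
          ⟨m, p, Ne.symm hpm, by simp [Function.update_apply, hpm]⟩]
        intro hcon
        have : k = 1 := by
          have := hcon.symm
          exact Fin.one_eq_zero_iff.mp this
        omega
      · intro i j hij
        funext a
        show G2Aux.gInd n k hnk (Function.update a i (a j)) = _
        rw [G2Aux.gInd_noninj hnk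
          ⟨i, j, hij, by simp [Function.update_apply, Ne.symm hij]⟩, hzero]
      · intro σ a
        show f (a ∘ ⇑σ) - G2Aux.gInd n k hnk (a ∘ ⇑σ) = f a - G2Aux.gInd n k hnk a
        rw [G2Aux.gInd_perm]
        congr 1
        calc f (a ∘ ⇑σ) = f ((a ∘ ⇑σ) ∘ ⇑(Tuple.sort (a ∘ ⇑σ))) := (hf0 _).symm
          _ = f (a ∘ ⇑(Tuple.sort a)) := by rw [Tuple.comp_perm_comp_sort_eq_comp_sort]
          _ = f a := hf0 a
      · intro i j hij m
        have hmt : minor (fun a => f a - G2Aux.gInd n k hnk a) i j = minor f i j := by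
          funext a
          show f (Function.update a i (a j)) - G2Aux.gInd n k hnk _
              = f (Function.update a i (a j))
          rw [G2Aux.gInd_noninj hnk
            ⟨i, j, hij, by simp [Function.update_apply, Ne.symm hij]⟩, sub_zero]
        rw [hmt]
        exact key i j hij m
    · -- `f` is not totally symmetric
      push_neg at hf0
      obtain ⟨a₀, ha₀⟩ := hf0
      have hteq : ∀ a : Fin n → Fin k, (∃ p q, p ≠ q ∧ a p = a q) →
          f (a ∘ ⇑(Tuple.sort a)) = f a := fun a h => hsym (Tuple.sort a) a h
      have hga : f a₀ - f (a₀ ∘ ⇑(Tuple.sort a₀)) ≠ 0 := sub_ne_zero_of_ne (Ne.symm ha₀)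
      refine ⟨fun a => f (a ∘ ⇑(Tuple.sort a)), fun a => f a - f (a ∘ ⇑(Tuple.sort a)),
        ?_, ?_, ?_, ?_, ?_⟩
      · funext a; exact (add_sub_cancel _ _).symm
      · intro m
        obtain ⟨p, hpm⟩ := G2Aux.exists_one_ne (by omega) m
        refine ⟨a₀, a₀ p, ?_⟩
        show f (Function.update a₀ m (a₀ p))
            - f ((Function.update a₀ m (a₀ p)) ∘ ⇑(Tuple.sort (Function.update a₀ m (a₀ p)))) ≠ _
        rw [hteq _ ⟨m, p, Ne.symm hpm, by simp [Function.update_apply, hpm]⟩, sub_self]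
        exact Ne.symm hga
      · intro i j hij
        funext a
        show f (Function.update a i (a j))
            - f ((Function.update a i (a j)) ∘ ⇑(Tuple.sort (Function.update a i (a j)))) = _
        rw [hteq _ ⟨i, j, hij, by simp [Function.update_apply, Ne.symm hij]⟩, sub_self, hzero]
      · intro σ a
        exact congrArg f Tuple.comp_perm_comp_sort_eq_comp_sort
      · intro i j hij m
        have hmt : minor (fun a => f (a ∘ ⇑(Tuple.sort a))) i j = minor f i j := by
          funext a
          show f ((Function.update a i (a j)) ∘ ⇑(Tuple.sort (Function.update a i (a j))))
              = f (Function.update a i (a j))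
          exact hteq _ ⟨i, j, hij, by simp [Function.update_apply, Ne.symm hij]⟩
        rw [hmt]
        exact key i j hij m
  · rintro ⟨t, g, hfeq, hgess, hgmin, htsym, htess⟩
    have hgvan : ∀ a : Fin n → Fin k, ∀ p q : Fin n, p ≠ q → a p = a q → g a = 0 := by
      intro a p q hpq hpa
      have hc := congrFun (hgmin p q hpq) a
      simp only [minor] at hc
      rw [← hpa, Function.update_eq_self] at hc
      rw [hzero] at hc
      exact hc
    have hminor_eq : ∀ i j : Fin n, i ≠ j → minor f i j = minor t i j := by
      intro i j hij
      funext a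
      show f (Function.update a i (a j)) = t (Function.update a i (a j))
      rw [hfeq]
      simp only
      rw [hgvan _ i j hij (by simp [Function.update_apply, Ne.symm hij]), add_zero]
    have hfess : ∀ m, Essential f m := by
      intro m
      obtain ⟨i, j, hij, him, hjm⟩ := G2Aux.exists_two_ne (by omega) m
      have hm := (htess i j hij m).mpr ⟨Ne.symm him, Ne.symm hjm⟩
      obtain ⟨a, b, hab⟩ := hm
      refine ⟨Function.update a i (a j), b, fun hcon => hab ?_⟩
      simp only [minor]
      have e1 : Function.update (Function.update a m b) i ((Function.update a m b) j)
          = Function.update (Function.update a i (a j)) m b := by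
        rw [Function.update_of_ne hjm]
        exact Function.update_comm (Ne.symm him) _ _ _
      rw [e1]
      have c1 : f (Function.update (Function.update a i (a j)) m b)
          = t (Function.update (Function.update a i (a j)) m b) := by
        rw [hfeq]
        simp only
        rw [hgvan _ i j hij
          (by simp [Function.update_apply, him, hjm, Ne.symm hij]), add_zero]
      have c2 : f (Function.update a i (a j)) = t (Function.update a i (a j)) := by
        rw [hfeq]
        simp only
        rw [hgvan _ i j hij (by simp [Function.update_apply, Ne.symm hij]), add_zero]
      rw [← c1, ← c2]
      exact hcon
    have hcount : essCount f = n := by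
      unfold essCount
      rw [Finset.filter_true_of_mem (fun i _ => hfess i), Finset.card_univ, Fintype.card_fin]
    refine ⟨hcount, ?_, ?_⟩
    · unfold gap
      rw [hcount]
      have hS : ∀ p : Fin n × Fin n,
          p ∈ Finset.univ.filter
            (fun p : Fin n × Fin n => p.1 ≠ p.2 ∧ Essential f p.1 ∧ Essential f p.2) →
          essCount (minor f p.1 p.2) = n - 2 := by
        intro p hp
        have hne : p.1 ≠ p.2 := (Finset.mem_filter.mp hp).2.1
        rw [hminor_eq _ _ hne]
        unfold essCount
        rw [Finset.filter_congr (fun m _ => htess p.1 p.2 hne m)]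
        exact G2Aux.card_filter_ne hne
      have hSne : (Finset.univ.filter
          (fun p : Fin n × Fin n => p.1 ≠ p.2 ∧ Essential f p.1 ∧ Essential f p.2)).Nonempty := by
        refine ⟨(⟨0, by omega⟩, ⟨1, by omega⟩), ?_⟩
        simp only [Finset.mem_filter, Finset.mem_univ, true_and]
        exact ⟨by simp [Fin.ext_iff], hfess _, hfess _⟩
      rw [Finset.sup_congr rfl hS, Finset.sup_const hSne]
      omega
    · intro u v huv hE
      rw [hminor_eq u v huv] at hE
      exact ((htess u v huv v).mp hE).2 rfl
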